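/- Let 0 ≤ s < t ≤ M with M ≥ 1, and let exponents satisfy 0 < m♭ ≤ 1 ≤ m♯. If t^{m♯} − s^{m♯} ≥ λ > 0, then t^{m♭} − s^{m♭} ≥ (m♭/m♯) · M^{m♭ − m♯} · min{λ, λ^{m♭/m♯}}. -/

import Mathlib

/-- If `0 ≤ s < t ≤ M`, `M ≥ 1`, `0 < m♭ ≤ 1 ≤ m♯`, and
`t^m♯ − s^m♯ ≥ λ > 0`, then `t^m♭ − s^m♭ ≥ (m♭/m♯) M^(m♭−m♯) min{λ, λ^(m♭/m♯)}`. -/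
theorem stmt_1 (s t M lam mb ms : ℝ) (hs : 0 ≤ s) (hst : s < t) (htM : t ≤ M)
    (hM : 1 ≤ M) (hmb : 0 < mb) (hmb1 : mb ≤ 1) (hms : 1 ≤ ms) (hlam : 0 < lam)
    (h : lam ≤ t ^ ms - s ^ ms) :
    mb / ms * M ^ (mb - ms) * min lam (lam ^ (mb / ms)) ≤ t ^ mb - s ^ mb := by
  have hms0 : (0:ℝ) < ms := lt_of_lt_of_le one_pos hms
  set θ := mb / ms with hθdef
  have hθ0 : 0 < θ := div_pos hmb hms0
  have hθ1 : θ ≤ 1 := by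
    rw [hθdef, div_le_one hms0]; linarith
  have ht0 : 0 < t := hs.trans_lt hst
  have hM0 : (0:ℝ) < M := lt_of_lt_of_le one_pos hM
  set a := s ^ ms with ha_def
  set b := t ^ ms with hb_def
  have hb0 : 0 < b := Real.rpow_pos_of_pos ht0 ms
  have ha0 : 0 ≤ a := Real.rpow_nonneg hs ms
  have hab : a ≤ b := Real.rpow_le_rpow hs hst.le hms0.le
  -- weighted AM-GM : (a/b)^θ ≤ θ*(a/b) + (1-θ)
  have hu : (a / b) ^ θ ≤ θ * (a / b) + (1 - θ) * 1 := by
    have := Real.geom_mean_le_arith_mean2_weighted (w₁ := θ) (w₂ := 1 - θ)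
      (p₁ := a / b) (p₂ := 1) hθ0.le (by linarith)
      (div_nonneg ha0 hb0.le) zero_le_one (by ring)
    simpa using this
  have hbθ : 0 < b ^ θ := Real.rpow_pos_of_pos hb0 θ
  have hbθ1 : 0 < b ^ (θ - 1) := Real.rpow_pos_of_pos hb0 (θ - 1)
  have hc : b ^ (θ - 1) * b = b ^ θ := by
    have := (Real.rpow_add hb0 (θ - 1) 1).symm
    simpa [Real.rpow_one] using this
  have hdiv : (a / b) ^ θ = a ^ θ / b ^ θ := Real.div_rpow ha0 hb0.le θ
  -- key concavity inequality
  have key : θ * b ^ (θ - 1) * (b - a) ≤ b ^ θ - a ^ θ := by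
    have h1 : a ^ θ ≤ (θ * (a / b) + (1 - θ) * 1) * b ^ θ := by
      rw [hdiv] at hu
      exact (div_le_iff₀ hbθ).mp hu
    have h2 : (θ * (a / b) + (1 - θ) * 1) * b ^ θ = θ * a * b ^ (θ - 1) + (1 - θ) * b ^ θ := by
      rw [← hc]
      field_simp
    rw [h2] at h1
    nlinarith [hc]
  -- bound on b^(θ-1)
  have hd : M ^ (mb - ms) ≤ b ^ (θ - 1) := by
    have hbM : b ≤ M ^ ms := Real.rpow_le_rpow ht0.le htM hms0.le
    have h3 := Real.rpow_le_rpow_of_nonpos hb0 hbM (by linarith : θ - 1 ≤ 0)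
    rw [← Real.rpow_mul hM0.le] at h3
    have hexp : ms * (θ - 1) = mb - ms := by
      rw [hθdef]; field_simp
    rwa [hexp] at h3
  -- rewrite goal
  have htθ : b ^ θ = t ^ mb := by
    rw [hb_def, ← Real.rpow_mul ht0.le]
    congr 1
    field_simp [hθdef]
    rw [hθdef]; field_simp
  have hsθ : a ^ θ = s ^ mb := by
    rw [ha_def, ← Real.rpow_mul hs]
    congr 1
    field_simp [hθdef]
    rw [hθdef]; field_simp
  have hchain : θ * M ^ (mb - ms) * min lam (lam ^ θ) ≤ θ * b ^ (θ - 1) * (b - a) := by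
    have hmin : min lam (lam ^ θ) ≤ b - a := (min_le_left _ _).trans h
    have hminpos : 0 ≤ min lam (lam ^ θ) :=
      le_min hlam.le (Real.rpow_nonneg hlam.le θ)
    gcongr
  calc mb / ms * M ^ (mb - ms) * min lam (lam ^ θ) ≤ θ * b ^ (θ - 1) * (b - a) := hchain
    _ ≤ b ^ θ - a ^ θ := key
    _ = t ^ mb - s ^ mb := by rw [htθ, hsθ]
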